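/- Let S ⊆ S' be finite nonempty sets of points in ℝ^d, let c and r be the center and radius of the minimum enclosing ball of S, and let c' and r' be the center and radius of the minimum enclosing ball of S'. Then r' ≥ √(r² + ‖c − c'‖²). -/

import Mathlib

/-- `IsMEB P c r` says the closed ball of center `c` and radius `r` is the minimum enclosing
ball of `P`: it contains `P`, and any ball containing `P` has radius at least `r`. -/
def IsMEB {d : ℕ} (P : Set (EuclideanSpace ℝ (Fin d)))
    (c : EuclideanSpace ℝ (Fin d)) (r : ℝ) : Prop :=
  (∀ p ∈ P, dist p c ≤ r) ∧
    ∀ (c' : EuclideanSpace ℝ (Fin d)) (r' : ℝ), (∀ p ∈ P, dist p c' ≤ r') → r ≤ r'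

/-- if `S ⊆ S'` are finite nonempty sets with minimum enclosing balls of centers
`c, c'` and radii `r, r'` respectively, then `r' ≥ √(r² + ‖c − c'‖²)`. -/
theorem meb_radius_monotone_sqrt {d : ℕ}
    (S S' : Set (EuclideanSpace ℝ (Fin d))) (hsub : S ⊆ S')
    (hfin : S.Finite) (hne : S.Nonempty) (hfin' : S'.Finite) (hne' : S'.Nonempty)
    (c c' : EuclideanSpace ℝ (Fin d)) (r r' : ℝ)
    (hmeb : IsMEB S c r) (hmeb' : IsMEB S' c' r') :
    Real.sqrt (r ^ 2 + (dist c c') ^ 2) ≤ r' := by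
  obtain ⟨hc, hmin⟩ := hmeb
  obtain ⟨hc', hmin'⟩ := hmeb'
  obtain ⟨p0, hp0⟩ := hne
  have hr0 : 0 ≤ r := le_trans dist_nonneg (hc p0 hp0)
  have hr'0 : 0 ≤ r' := le_trans dist_nonneg (hc' p0 (hsub hp0))
  set v : EuclideanSpace ℝ (Fin d) := c' - c with hv
  have hdcc : dist c c' = ‖v‖ := by
    rw [dist_eq_norm, ← norm_neg]; congr 1; simp [hv]
  have key : ∀ t : ℝ, 0 < t → t ≤ 1 → r ^ 2 + (1 - t) * ‖v‖ ^ 2 ≤ r' ^ 2 := by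
    intro t ht ht1
    set ct : EuclideanSpace ℝ (Fin d) := c + t • v with hct
    have hM : ∀ p ∈ S, (dist p ct) ^ 2
        = (1 - t) * (dist p c) ^ 2 + t * (dist p c') ^ 2 - t * (1 - t) * ‖v‖ ^ 2 := by
      intro p hp
      have h1 : dist p ct = ‖(p - c) - t • v‖ := by
        rw [dist_eq_norm, hct]; congr 1; abel
      have h2 : dist p c = ‖p - c‖ := dist_eq_norm _ _
      have h3 : dist p c' = ‖(p - c) - v‖ := by
        rw [dist_eq_norm, hv]; congr 1; abel
      rw [h1, h2, h3]
      have e1 := @norm_sub_sq_real (EuclideanSpace ℝ (Fin d)) _ _ (p - c) (t • v)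
      have e2 := @norm_sub_sq_real (EuclideanSpace ℝ (Fin d)) _ _ (p - c) v
      rw [real_inner_smul_right, norm_smul, Real.norm_eq_abs] at e1
      nlinarith [sq_abs t]
    set M : ℝ := (1 - t) * r ^ 2 + t * r' ^ 2 - t * (1 - t) * ‖v‖ ^ 2 with hMdef
    have hd2 : ∀ p ∈ S, (dist p ct) ^ 2 ≤ M := by
      intro p hp
      rw [hM p hp, hMdef]
      have h1 := hc p hp
      have h2 := hc' p (hsub hp)
      have h3 : (0:ℝ) ≤ dist p c := dist_nonneg
      have h4 : (0:ℝ) ≤ dist p c' := dist_nonneg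
      have q1 : dist p c ^ 2 ≤ r ^ 2 := by nlinarith
      have q2 : dist p c' ^ 2 ≤ r' ^ 2 := by nlinarith
      nlinarith [mul_le_mul_of_nonneg_left q1 (by linarith : (0:ℝ) ≤ 1 - t),
        mul_le_mul_of_nonneg_left q2 ht.le]
    have hMp : ∀ p ∈ S, dist p ct ≤ Real.sqrt M := by
      intro p hp
      calc dist p ct = Real.sqrt ((dist p ct) ^ 2) := (Real.sqrt_sq dist_nonneg).symm
        _ ≤ Real.sqrt M := Real.sqrt_le_sqrt (hd2 p hp)
    have hrM : r ≤ Real.sqrt M := hmin ct (Real.sqrt M) hMp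
    have hM0 : 0 ≤ M := le_trans (sq_nonneg _) (hd2 p0 hp0)
    have hr2M : r ^ 2 ≤ M := by
      have := Real.sq_sqrt hM0
      nlinarith [Real.sqrt_nonneg M]
    rw [hMdef] at hr2M
    nlinarith
  have final : r ^ 2 + ‖v‖ ^ 2 ≤ r' ^ 2 := by
    by_contra h
    push_neg at h
    have hv0 : 0 < ‖v‖ ^ 2 := by
      rcases (sq_nonneg ‖v‖).lt_or_eq with h' | h'
      · exact h'
      · have := key 1 one_pos le_rfl
        nlinarith
    set ε : ℝ := r ^ 2 + ‖v‖ ^ 2 - r' ^ 2 with hε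
    have hεpos : 0 < ε := by rw [hε]; linarith
    set t : ℝ := min 1 (ε / (2 * ‖v‖ ^ 2)) with htdef
    have ht : 0 < t := lt_min one_pos (by positivity)
    have ht1 : t ≤ 1 := min_le_left _ _
    have htε : t * ‖v‖ ^ 2 ≤ ε / 2 := by
      have : t ≤ ε / (2 * ‖v‖ ^ 2) := min_le_right _ _
      have h2 : t * ‖v‖ ^ 2 ≤ (ε / (2 * ‖v‖ ^ 2)) * ‖v‖ ^ 2 :=
        mul_le_mul_of_nonneg_right this (le_of_lt hv0)
      calc t * ‖v‖ ^ 2 ≤ (ε / (2 * ‖v‖ ^ 2)) * ‖v‖ ^ 2 := h2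
        _ = ε / 2 := by rw [div_mul_eq_mul_div, mul_div_mul_right _ _ hv0.ne']
    have := key t ht ht1
    nlinarith
  rw [hdcc]
  calc Real.sqrt (r ^ 2 + ‖v‖ ^ 2) ≤ Real.sqrt (r' ^ 2) := Real.sqrt_le_sqrt final
    _ = r' := Real.sqrt_sq hr'0
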